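/- Let L be a finite lattice with bottom element ⊥ and let m be a positive integer. Consider the lattice L^[m] of m-multichains of L, i.e., monotone functions from the m-element chain {1 < 2 < … < m} to L, ordered componentwise (joins and meets are computed componentwise). For a join-irreducible element j of L and k ∈ {1, …, m}, let (j)_k denote the multichain whose i-th entry is ⊥ for i < k and j for i ≥ k. Then the join-irreducible elements of L^[m] are exactly the elements (j)_k with j join-irreducible in L and k ∈ {1, …, m}. -/

import Mathlib

universe u v

def JoinSemidistrib (α : Type*) [Lattice α] : Prop :=
  ∀ x y z : α, x ⊔ y = x ⊔ z → x ⊔ (y ⊓ z) = x ⊔ y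

def MeetSemidistrib (α : Type*) [Lattice α] : Prop :=
  ∀ x y z : α, x ⊓ y = x ⊓ z → x ⊓ (y ⊔ z) = x ⊓ y

section JoinDefs

variable {α : Type*} [Lattice α] [OrderBot α]

/-- `j` is join-irreducible: not the bottom element, and `j = a ⊔ b` implies `j = a` or `j = b`. -/
def JoinIrred (j : α) : Prop :=
  j ≠ ⊥ ∧ ∀ a b : α, j = a ⊔ b → j = a ∨ j = b

/-- `A` join-refines `B`: every element of `A` is below some element of `B`. -/
def JoinRefines (A B : Finset α) : Prop :=
  ∀ a ∈ A, ∃ b ∈ B, a ≤ b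

/-- `A` is an irredundant join representation of `w`. -/
def IrredJoinRep (A : Finset α) (w : α) : Prop :=
  A.sup id = w ∧ ∀ A' ⊂ A, A'.sup id < w

/-- `A` is the canonical join representation of `w`: the irredundant join representation
of `w` that join-refines every irredundant join representation of `w`. -/
def CanonicalJoinRep (A : Finset α) (w : α) : Prop :=
  IrredJoinRep A w ∧ ∀ B : Finset α, IrredJoinRep B w → JoinRefines A B

/-- `A` joins canonically, i.e. `A` is a face of the canonical join complex. -/
def JoinsCanonically (A : Finset α) : Prop :=
  CanonicalJoinRep A (A.sup id)

/-- `j` is a canonical joinand of `w`. -/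
def CanonicalJoinand (j w : α) : Prop :=
  ∃ A : Finset α, CanonicalJoinRep A w ∧ j ∈ A

end JoinDefs

/-- The canonical join complex is flag: any finite set of join-irreducible elements all of
whose two-element subsets are faces is itself a face. -/
def FlagCanonicalJoinComplex (α : Type*) [Lattice α] [OrderBot α] [DecidableEq α] : Prop :=
  ∀ F : Finset α, (∀ j ∈ F, JoinIrred j) →
    (∀ j ∈ F, ∀ j' ∈ F, j ≠ j' → JoinsCanonically ({j, j'} : Finset α)) →
    JoinsCanonically F

/-- A lattice is crosscut-simplicial if for every `x ≤ y` and every proper subset `S` of the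
set of atoms of the interval `[x, y]` (elements `a` with `x ⋖ a` and `a ≤ y`), the join of `x`
with all elements of `S` is strictly less than `y`. -/
def CrosscutSimplicial (β : Type*) [Lattice β] : Prop :=
  ∀ x y : β, x ≤ y → ∀ S : Finset β,
    (∀ a ∈ S, x ⋖ a ∧ a ≤ y) →
    (∃ a : β, (x ⋖ a ∧ a ≤ y) ∧ a ∉ S) →
    S.fold (· ⊔ · : β → β → β) x id < y

section MeetDefs

variable {α : Type*} [Lattice α] [OrderTop α]

/-- `m` is meet-irreducible: not the top element, and `m = a ⊓ b` implies `m = a` or `m = b`. -/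
def MeetIrred (m : α) : Prop :=
  m ≠ ⊤ ∧ ∀ a b : α, m = a ⊓ b → m = a ∨ m = b

/-- `A` meet-refines `B`: every element of `A` is above some element of `B`. -/
def MeetRefines (A B : Finset α) : Prop :=
  ∀ a ∈ A, ∃ b ∈ B, b ≤ a

/-- `A` is an irredundant meet representation of `w`. -/
def IrredMeetRep (A : Finset α) (w : α) : Prop :=
  A.inf id = w ∧ ∀ A' ⊂ A, w < A'.inf id

/-- `A` is the canonical meet representation of `w`. -/
def CanonicalMeetRep (A : Finset α) (w : α) : Prop :=
  IrredMeetRep A w ∧ ∀ B : Finset α, IrredMeetRep B w → MeetRefines A B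

/-- `A` meets canonically, i.e. `A` is a face of the canonical meet complex. -/
def MeetsCanonically (A : Finset α) : Prop :=
  CanonicalMeetRep A (A.inf id)

end MeetDefs

/-- The canonical meet complex is flag. -/
def FlagCanonicalMeetComplex (α : Type*) [Lattice α] [OrderTop α] [DecidableEq α] : Prop :=
  ∀ F : Finset α, (∀ m ∈ F, MeetIrred m) →
    (∀ m ∈ F, ∀ m' ∈ F, m ≠ m' → MeetsCanonically ({m, m'} : Finset α)) →
    MeetsCanonically F


/-- The multichain `(j)_k` in `L^[m]`: entries `⊥` below index `k` and `j` from `k` on. -/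
def multichainJK {α : Type*} [Lattice α] [OrderBot α] {m : ℕ} (j : α) (k : Fin m) :
    Fin m →o α :=
  ⟨fun i => if i < k then ⊥ else j, by
    intro i i' h
    dsimp only
    by_cases hi : i < k
    · simp [hi]
    · have hi' : ¬ i' < k := fun hk => hi (lt_of_le_of_lt h hk)
      simp [hi, hi']⟩


lemma multichainJK_apply {α : Type*} [Lattice α] [OrderBot α] {m : ℕ} (j : α) (k i : Fin m) :
    multichainJK j k i = if i < k then ⊥ else j := rfl

lemma joinIrred_of_sup {α : Type*} [Lattice α] [OrderBot α] {ι : Type*} [DecidableEq ι] (j : α)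
    (hj : JoinIrred j) :
    ∀ (s : Finset ι) (g : ι → α), j = s.sup g → ∃ a ∈ s, j = g a := by
  intro s
  induction s using Finset.induction_on with
  | empty => intro g h; simp only [Finset.sup_empty] at h; exact absurd h hj.1
  | insert _ _ ha ih =>
    intro g h
    rw [Finset.sup_insert] at h
    rcases hj.2 _ _ h with h1 | h2
    · exact ⟨_, Finset.mem_insert_self _ _, h1⟩
    · obtain ⟨b, hb, hb2⟩ := ih g h2
      exact ⟨b, Finset.mem_insert_of_mem hb, hb2⟩

/-- Proposition (join-irreducibles of the multichain lattice): the join-irreducible elements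
of `L^[m]` (monotone maps `Fin m →o L`, ordered componentwise) are exactly the `(j)_k` for
`j` join-irreducible in `L` and `k : Fin m`. -/
theorem stmt_18 {α : Type*} [Lattice α] [OrderBot α] [Fintype α]
    (m : ℕ) (hm : 0 < m) :
    ∀ f : Fin m →o α,
      JoinIrred f ↔ ∃ (j : α) (k : Fin m), JoinIrred j ∧ f = multichainJK j k := by
  intro f
  constructor
  · intro hf
    have hsup : f = Finset.univ.sup (fun k : Fin m => multichainJK (f k) k) := by
      apply le_antisymm
      · rw [OrderHom.le_def]
        intro i
        have h1 : multichainJK (f i) i ≤ Finset.univ.sup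
            (fun k : Fin m => multichainJK (f k) k) :=
          Finset.le_sup (f := fun k : Fin m => multichainJK (f k) k) (Finset.mem_univ i)
        have h2 := OrderHom.le_def.mp h1 i
        simpa [multichainJK_apply] using h2
      · apply Finset.sup_le
        intro k _
        rw [OrderHom.le_def]
        intro i
        rw [multichainJK_apply]
        by_cases hik : i < k
        · simp [hik]
        · simpa [hik] using f.monotone (not_lt.mp hik)
    obtain ⟨k, -, hk⟩ := joinIrred_of_sup f hf Finset.univ _ hsup
    refine ⟨f k, k, ⟨?_, ?_⟩, hk⟩
    · intro hbot
      apply hf.1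
      apply le_bot_iff.mp
      rw [OrderHom.le_def]
      intro i
      have := congrArg (fun g : Fin m →o α => g i) hk
      rw [this, multichainJK_apply, hbot]
      split <;> simp
    · intro a b hab
      have hsplit : f = multichainJK a k ⊔ multichainJK b k := by
        rw [hk]
        ext i
        simp only [OrderHom.coe_sup, Pi.sup_apply, multichainJK_apply]
        by_cases hik : i < k
        · simp [hik]
        · simp [hik, hab]
      rcases hf.2 _ _ hsplit with h | h
      · left
        have := congrArg (fun g : Fin m →o α => g k) h
        simpa [multichainJK_apply] using this
      · right
        have := congrArg (fun g : Fin m →o α => g k) h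
        simpa [multichainJK_apply] using this
  · rintro ⟨j, k, hj, rfl⟩
    constructor
    · intro hbot
      apply hj.1
      have := congrArg (fun g : Fin m →o α => g k) hbot
      simpa [multichainJK_apply] using this
    · intro a b hab
      have hk : j = a k ⊔ b k := by
        have := congrArg (fun g : Fin m →o α => g k) hab
        simpa [multichainJK_apply] using this
      have key : ∀ c : Fin m →o α, c ≤ multichainJK j k → j = c k →
          multichainJK j k = c := by
        intro c hle hck
        apply le_antisymm _ hle
        rw [OrderHom.le_def]
        intro i
        rw [multichainJK_apply]
        by_cases hik : i < k
        · simp [hik]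
        · simpa [hik, ← hck] using c.monotone (not_lt.mp hik)
      rcases hj.2 _ _ hk with h | h
      · exact Or.inl (key a (hab ▸ le_sup_left) h)
      · exact Or.inr (key b (hab ▸ le_sup_right) h)
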